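/- Define ‖f‖_∞ := max_{z∈V} |f(z)/d_z|. For every λ > 0 and x, y ∈ V, KD_λ(x,y) = sup{⟨J_λ f, δ_x − δ_y⟩ : f ∈ Lip_w^1(V), ‖f‖_∞ ≤ diam(H)}. Moreover, the set {f ∈ Lip_w^1(V) : ‖f‖_∞ ≤ diam(H)} is a compact subset of ℝ^V. -/

import Mathlib

open scoped BigOperators

noncomputable section

namespace HypRicci

variable {V : Type*} [Fintype V] [DecidableEq V]

/-- A finite weighted hypergraph on vertex set `V`: a finite set of nonempty
hyperedges together with positive weights. -/
structure Hypergraph (V : Type*) [Fintype V] [DecidableEq V] : Type _ where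
  E : Finset (Finset V)
  w : Finset V → ℝ
  w_pos : ∀ e ∈ E, 0 < w e
  e_nonempty : ∀ e ∈ E, e.Nonempty

/-- Degree `d_x = ∑_{e ∋ x} w(e)`. -/
def deg (H : Hypergraph V) (x : V) : ℝ := ∑ e ∈ H.E, if x ∈ e then H.w e else 0

/-- Volume `vol(V) = ∑_x d_x`. -/
def vol (H : Hypergraph V) : ℝ := ∑ x, deg H x

/-- Weighted inner product `⟨f,g⟩ = ∑_x f(x) g(x) / d_x`. -/
def inn (H : Hypergraph V) (f g : V → ℝ) : ℝ := ∑ x, f x * g x / deg H x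

/-- Norm associated to `inn`. -/
def nrm (H : Hypergraph V) (f : V → ℝ) : ℝ := Real.sqrt (inn H f f)

/-- Indicator function `δ_x`. -/
def delta (x : V) : V → ℝ := fun z => if z = x then 1 else 0

/-- Standard (unweighted) dot product `u^⊤ v`. -/
def dot (u v : V → ℝ) : ℝ := ∑ x, u x * v x

/-- Base polytope `B_e = conv{δ_x − δ_y : x,y ∈ e}`. -/
def Bp (e : Finset V) : Set (V → ℝ) :=
  convexHull ℝ {b : V → ℝ | ∃ x ∈ e, ∃ y ∈ e, b = delta x - delta y}

/-- The multivalued hypergraph Laplacian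
`L(f) = {∑_e w(e) (b_e^⊤ f) b_e : b_e ∈ argmax_{b ∈ B_e} b^⊤ f}`. -/
def Lap (H : Hypergraph V) (f : V → ℝ) : Set (V → ℝ) :=
  { g | ∃ b : Finset V → (V → ℝ),
      (∀ e ∈ H.E, b e ∈ Bp e ∧ ∀ b' ∈ Bp e, dot b' f ≤ dot (b e) f) ∧
      g = ∑ e ∈ H.E, (H.w e * dot (b e) f) • b e }

/-- `D⁻¹ f`. -/
def Dinv (H : Hypergraph V) (f : V → ℝ) : V → ℝ := fun x => f x / deg H x

/-- Normalized Laplacian `𝓛(f) = L(D⁻¹ f)`. -/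
def NL (H : Hypergraph V) (f : V → ℝ) : Set (V → ℝ) := Lap H (Dinv H f)

/-- The resolvent `J_λ = (I + λ𝓛)⁻¹`: it sends `f` to the (unique) `g` with
`f ∈ g + λ 𝓛(g)`. -/
def Resolvent (H : Hypergraph V) (l : ℝ) (f : V → ℝ) : V → ℝ :=
  Classical.epsilon fun g => ∃ h ∈ NL H g, f = g + l • h

/-- Adjacency: `x ∼ y` iff some hyperedge contains both. -/
def Adj (H : Hypergraph V) (x y : V) : Prop := ∃ e ∈ H.E, x ∈ e ∧ y ∈ e

/-- There is a chain of length `n` of successively adjacent vertices from `x` to `y`. -/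
def chainProp (H : Hypergraph V) (x y : V) (n : ℕ) : Prop :=
  ∃ z : ℕ → V, z 0 = x ∧ z n = y ∧ ∀ i < n, Adj H (z i) (z (i + 1))

/-- Connectedness of the hypergraph. -/
def Connected (H : Hypergraph V) : Prop := ∀ x y : V, ∃ n, chainProp H x y n

/-- Graph distance (as a natural number). -/
def hdistN (H : Hypergraph V) (x y : V) : ℕ := sInf {n | chainProp H x y n}

/-- Graph distance `d(x,y)` as a real number. -/
def gdist (H : Hypergraph V) (x y : V) : ℝ := (hdistN H x y : ℝ)

/-- Diameter `diam(H) = max_{x,y} d(x,y)`. -/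
def hdiam (H : Hypergraph V) : ℝ :=
  (((Finset.univ : Finset (V × V)).sup fun p => hdistN H p.1 p.2 : ℕ) : ℝ)

/-- Weighted `1`-Lipschitz functions: `⟨f, δ_x − δ_y⟩ ≤ d(x,y)` for all `x, y`. -/
def Lip1 (H : Hypergraph V) : Set (V → ℝ) :=
  { f | ∀ x y : V, inn H f (delta x - delta y) ≤ gdist H x y }

/-- The `λ`-nonlinear Kantorovich difference. -/
def KD (H : Hypergraph V) (l : ℝ) (x y : V) : ℝ :=
  sSup { r | ∃ f ∈ Lip1 H, r = inn H (Resolvent H l f) (delta x - delta y) }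

/-- `κ_λ(x,y) = 1 − KD_λ(x,y)/d(x,y)`. -/
def kappa (H : Hypergraph V) (l : ℝ) (x y : V) : ℝ := 1 - KD H l x y / gdist H x y

/-- Lower coarse Ricci curvature `κ̲(x,y) = liminf_{λ↓0} κ_λ(x,y)/λ`. -/
def kappaLower (H : Hypergraph V) (x y : V) : EReal :=
  Filter.liminf (fun l : ℝ => ((kappa H l x y / l : ℝ) : EReal)) (nhdsWithin 0 (Set.Ioi 0))

/-- Upper coarse Ricci curvature `κ̄(x,y) = limsup_{λ↓0} κ_λ(x,y)/λ`. -/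
def kappaUpper (H : Hypergraph V) (x y : V) : EReal :=
  Filter.limsup (fun l : ℝ => ((kappa H l x y / l : ℝ) : EReal)) (nhdsWithin 0 (Set.Ioi 0))

/-- Canonical restriction `𝓛⁰ f`: the unique element of minimal norm of `𝓛(f)`. -/
def L0 (H : Hypergraph V) (f : V → ℝ) : V → ℝ :=
  Classical.epsilon fun g => g ∈ NL H f ∧ ∀ h ∈ NL H f, nrm H g ≤ nrm H h

/-- The stationary distribution `π(x) = d_x / vol(V)`. -/
def piH (H : Hypergraph V) : V → ℝ := fun x => deg H x / vol H

/-- The energy `Q(h) = (1/2) ∑_e w(e) max_{x,y ∈ e} (h(x) − h(y))²`. -/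
def Qform (H : Hypergraph V) (h : V → ℝ) : ℝ :=
  (1 / 2) * ∑ e ∈ H.E, H.w e * sSup { r | ∃ x ∈ e, ∃ y ∈ e, r = (h x - h y) ^ 2 }


set_option linter.unusedSectionVars false

section Algebra

variable (H : Hypergraph V)

lemma dot_comm (u v : V → ℝ) : dot u v = dot v u := by
  simp [dot, mul_comm]

lemma dot_add_right (u a b : V → ℝ) : dot u (a + b) = dot u a + dot u b := by
  simp [dot, mul_add, Finset.sum_add_distrib]

lemma dot_sub_right (u a b : V → ℝ) : dot u (a - b) = dot u a - dot u b := by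
  simp [dot, mul_sub, Finset.sum_sub_distrib]

lemma dot_smul_right (u : V → ℝ) (c : ℝ) (a : V → ℝ) : dot u (c • a) = c * dot u a := by
  simp only [dot, Pi.smul_apply, smul_eq_mul, Finset.mul_sum]
  congr 1; ext x; ring

lemma dot_smul_left (u : V → ℝ) (c : ℝ) (a : V → ℝ) : dot (c • a) u = c * dot a u := by
  rw [dot_comm, dot_smul_right, dot_comm]

lemma dot_sum_left {ι : Type*} (s : Finset ι) (F : ι → (V → ℝ)) (v : V → ℝ) :
    dot (∑ e ∈ s, F e) v = ∑ e ∈ s, dot (F e) v := by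
  simp [dot, Finset.sum_mul]
  exact Finset.sum_comm

lemma dot_neg_right (u a : V → ℝ) : dot u (-a) = - dot u a := by
  simp [dot]

lemma inn_eq_dot_dinv (a b : V → ℝ) : inn H a b = dot (Dinv H a) b := by
  simp [inn, dot, Dinv, div_mul_eq_mul_div, mul_comm]
  congr 1; ext x; ring

lemma inn_eq_dot_dinv' (a b : V → ℝ) : inn H a b = dot a (Dinv H b) := by
  simp [inn, dot, Dinv]
  congr 1; ext x; ring

lemma inn_comm (a b : V → ℝ) : inn H a b = inn H b a := by
  simp [inn, mul_comm]

lemma inn_add_left (a b c : V → ℝ) : inn H (a + b) c = inn H a c + inn H b c := by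
  simp [inn, add_mul, add_div, Finset.sum_add_distrib]

lemma inn_sub_left (a b c : V → ℝ) : inn H (a - b) c = inn H a c - inn H b c := by
  simp [inn, sub_mul, sub_div, Finset.sum_sub_distrib]

lemma inn_smul_left (c : ℝ) (a b : V → ℝ) : inn H (c • a) b = c * inn H a b := by
  simp [inn, Finset.mul_sum]
  congr 1; ext x; ring

lemma inn_self_nonneg (hdeg : ∀ x, 0 < deg H x) (a : V → ℝ) : 0 ≤ inn H a a := by
  refine Finset.sum_nonneg fun x _ => ?_
  exact div_nonneg (mul_self_nonneg _) (hdeg x).le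

lemma eq_zero_of_inn_self_nonpos (hdeg : ∀ x, 0 < deg H x) {a : V → ℝ}
    (h : inn H a a ≤ 0) : a = 0 := by
  have h0 : ∀ x ∈ Finset.univ, (0:ℝ) ≤ a x * a x / deg H x := fun x _ =>
    div_nonneg (mul_self_nonneg _) (hdeg x).le
  have := (Finset.sum_eq_zero_iff_of_nonneg h0).1 (le_antisymm h (Finset.sum_nonneg h0))
  funext x
  have hx := this x (Finset.mem_univ x)
  have hd := hdeg x
  have : a x * a x = 0 := by
    field_simp at hx; nlinarith [hx]
  simpa [Pi.zero_apply] using mul_self_eq_zero.1 this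

lemma dot_delta_sub (a b : V) (u : V → ℝ) : dot (delta a - delta b) u = u a - u b := by
  simp [dot, delta, sub_mul, Finset.sum_sub_distrib, ite_mul]

lemma sum_delta_sub (a b : V) : ∑ x, (delta a - delta b) x = 0 := by
  simp [delta, Finset.sum_sub_distrib]

end Algebra
section BpFacts

variable {e : Finset V}

lemma gen_mem_Bp {x y : V} (hx : x ∈ e) (hy : y ∈ e) : delta x - delta y ∈ Bp e :=
  subset_convexHull ℝ _ ⟨x, hx, y, hy, rfl⟩

lemma zero_mem_Bp (he : e.Nonempty) : (0 : V → ℝ) ∈ Bp e := by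
  obtain ⟨x, hx⟩ := he
  simpa using gen_mem_Bp hx hx

lemma dot_zero_left (u : V → ℝ) : dot 0 u = 0 := by simp [dot]

lemma isLinearMap_dot (u : V → ℝ) : IsLinearMap ℝ (fun b => dot b u) := by
  constructor
  · intro a b; rw [dot_comm, dot_add_right, dot_comm u a, dot_comm u b]
  · intro c a; exact dot_smul_left u c a

lemma Bp_dot_le {u : V → ℝ} {c : ℝ}
    (hgen : ∀ x ∈ e, ∀ y ∈ e, u x - u y ≤ c) :
    ∀ b ∈ Bp e, dot b u ≤ c := by
  intro b hb
  have hconv : Convex ℝ {b : V → ℝ | dot b u ≤ c} :=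
    convex_halfSpace_le (isLinearMap_dot u) c
  refine convexHull_min ?_ hconv hb
  rintro b ⟨x, hx, y, hy, rfl⟩
  simpa [dot_delta_sub] using hgen x hx y hy

lemma Bp_sum_zero {b : V → ℝ} (hb : b ∈ Bp e) : ∑ x, b x = 0 := by
  have hconv : Convex ℝ {b : V → ℝ | ∑ x, b x = 0} := by
    refine convex_hyperplane ?_ 0
    constructor
    · intro a b; simp [Finset.sum_add_distrib]
    · intro c a; simp [Finset.mul_sum]
  refine convexHull_min ?_ hconv hb
  rintro b ⟨x, hx, y, hy, rfl⟩
  exact sum_delta_sub x y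

lemma dot_const_of_Bp {b : V → ℝ} (hb : b ∈ Bp e) (c : ℝ) : dot b (fun _ => c) = 0 := by
  have : dot b (fun _ => c) = (∑ x, b x) * c := by
    simp [dot, Finset.sum_mul]
  rw [this, Bp_sum_zero hb, zero_mul]

lemma continuous_dot_left (u : V → ℝ) : Continuous (fun b : V → ℝ => dot b u) := by
  unfold dot
  exact continuous_finset_sum _ fun x _ => (continuous_apply x).mul continuous_const

lemma Bp_finite_gen : {b : V → ℝ | ∃ x ∈ e, ∃ y ∈ e, b = delta x - delta y} =
    (fun p : V × V => delta p.1 - delta p.2) '' ↑(e ×ˢ e) := by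
  ext b
  simp only [Set.mem_setOf_eq, Set.mem_image, Finset.coe_product, Set.mem_prod]
  constructor
  · rintro ⟨x, hx, y, hy, rfl⟩; exact ⟨(x, y), ⟨hx, hy⟩, rfl⟩
  · rintro ⟨⟨x, y⟩, ⟨hx, hy⟩, rfl⟩; exact ⟨x, hx, y, hy, rfl⟩

lemma Bp_isCompact : IsCompact (Bp e) := by
  refine Set.Finite.isCompact_convexHull (𝕜 := ℝ) (E := V → ℝ) ?_
  rw [Bp_finite_gen]
  exact ((e ×ˢ e).finite_toSet).image _

lemma Bp_convex : Convex ℝ (Bp e) := convex_convexHull ℝ _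

/-- The support function of `Bp e`. -/
def sig (e : Finset V) (u : V → ℝ) : ℝ :=
  if h : (e ×ˢ e).Nonempty then (e ×ˢ e).sup' h (fun p => u p.1 - u p.2) else 0

lemma prod_ne (he : e.Nonempty) : (e ×ˢ e).Nonempty := Finset.Nonempty.product he he

lemma sig_eq (he : e.Nonempty) (u : V → ℝ) : sig e u = (e ×ˢ e).sup' (prod_ne he) (fun p => u p.1 - u p.2) :=
  dif_pos _

lemma gen_le_sig (he : e.Nonempty) {x y : V} (hx : x ∈ e) (hy : y ∈ e) (u : V → ℝ) :
    u x - u y ≤ sig e u := by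
  rw [sig_eq he]
  exact Finset.le_sup' (f := fun p : V × V => u p.1 - u p.2) (b := (x, y))
    (Finset.mem_product.2 ⟨hx, hy⟩)

lemma sig_nonneg (he : e.Nonempty) (u : V → ℝ) : 0 ≤ sig e u := by
  obtain ⟨x, hx⟩ := he
  simpa using gen_le_sig ⟨x, hx⟩ hx hx u

lemma sig_exists_argmax (he : e.Nonempty) (u : V → ℝ) : ∃ x ∈ e, ∃ y ∈ e, sig e u = u x - u y := by
  obtain ⟨p, hp, hval⟩ := Finset.exists_mem_eq_sup' (prod_ne he) (fun p : V × V => u p.1 - u p.2)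
  obtain ⟨hx, hy⟩ := Finset.mem_product.1 hp
  exact ⟨p.1, hx, p.2, hy, by rw [sig_eq he, hval]⟩

lemma dot_le_sig (he : e.Nonempty) {b : V → ℝ} (hb : b ∈ Bp e) (u : V → ℝ) : dot b u ≤ sig e u :=
  Bp_dot_le (fun x hx y hy => gen_le_sig he hx hy u) b hb

lemma sig_continuous : Continuous (fun u : V → ℝ => sig e u) := by
  unfold sig
  by_cases h : (e ×ˢ e).Nonempty
  · simp only [dif_pos h]
    exact Continuous.finset_sup'_apply h fun p _ =>
      (continuous_apply p.1).sub (continuous_apply p.2)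
  · simp only [dif_neg h]; exact continuous_const

end BpFacts

section Mono

variable (H : Hypergraph V)

lemma dot_sub_left (a b u : V → ℝ) : dot (a - b) u = dot a u - dot b u := by
  rw [dot_comm, dot_sub_right, dot_comm u a, dot_comm u b]

lemma Lap_monotone {u1 u2 h1 h2 : V → ℝ} (hm1 : h1 ∈ Lap H u1) (hm2 : h2 ∈ Lap H u2) :
    0 ≤ dot (h1 - h2) (u1 - u2) := by
  obtain ⟨b1, hb1, rfl⟩ := hm1
  obtain ⟨b2, hb2, rfl⟩ := hm2
  rw [dot_sub_left, dot_sum_left, dot_sum_left, ← Finset.sum_sub_distrib]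
  refine Finset.sum_nonneg fun e heE => ?_
  obtain ⟨hB1, hmax1⟩ := hb1 e heE
  obtain ⟨hB2, hmax2⟩ := hb2 e heE
  have hw := H.w_pos e heE
  have hz : (0 : V → ℝ) ∈ Bp e := zero_mem_Bp (H.e_nonempty e heE)
  have ha1 : 0 ≤ dot (b1 e) u1 := by
    have := hmax1 0 hz; rwa [dot_zero_left] at this
  have ha2 : 0 ≤ dot (b2 e) u2 := by
    have := hmax2 0 hz; rwa [dot_zero_left] at this
  have hq : dot (b2 e) u1 ≤ dot (b1 e) u1 := hmax1 _ hB2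
  have hp : dot (b1 e) u2 ≤ dot (b2 e) u2 := hmax2 _ hB1
  rw [dot_smul_left, dot_smul_left, dot_sub_right, dot_sub_right]
  set a1 := dot (b1 e) u1
  set a2 := dot (b2 e) u2
  set p := dot (b1 e) u2
  set q := dot (b2 e) u1
  have key : 0 ≤ a1 * (a1 - p) - a2 * (q - a2) := by nlinarith [sq_nonneg (a1 - a2)]
  nlinarith [mul_nonneg hw.le key]

lemma Dinv_sub (a b : V → ℝ) : Dinv H (a - b) = Dinv H a - Dinv H b := by
  funext x; simp [Dinv, sub_div]

lemma NL_monotone {g1 g2 h1 h2 : V → ℝ} (hm1 : h1 ∈ NL H g1) (hm2 : h2 ∈ NL H g2) :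
    0 ≤ inn H (g1 - g2) (h1 - h2) := by
  have : inn H (g1 - g2) (h1 - h2) = dot (h1 - h2) (Dinv H g1 - Dinv H g2) := by
    rw [inn_eq_dot_dinv, dot_comm, Dinv_sub]
  rw [this]
  exact Lap_monotone H hm1 hm2

lemma inn_smul_right (c : ℝ) (a b : V → ℝ) : inn H a (c • b) = c * inn H a b := by
  rw [inn_comm, inn_smul_left, inn_comm]

lemma inn_sub_right (a b c : V → ℝ) : inn H a (b - c) = inn H a b - inn H a c := by
  rw [inn_comm, inn_sub_left, inn_comm H b, inn_comm H c]

lemma resolvent_unique (hdeg : ∀ x, 0 < deg H x) {l : ℝ} (hl : 0 < l) {f g1 g2 h1 h2 : V → ℝ}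
    (hm1 : h1 ∈ NL H g1) (hm2 : h2 ∈ NL H g2)
    (e1 : f = g1 + l • h1) (e2 : f = g2 + l • h2) : g1 = g2 := by
  have hsub : g1 - g2 = l • (h2 - h1) := by
    have := e1.symm.trans e2
    have h2' : g1 - g2 = l • h2 - l • h1 := by
      rw [sub_eq_sub_iff_add_eq_add, this, add_comm]
    rw [h2', smul_sub]
  have hinn : inn H (g1 - g2) (g1 - g2) ≤ 0 := by
    have h0 := NL_monotone H hm1 hm2
    calc inn H (g1 - g2) (g1 - g2) = l * inn H (g1 - g2) (h2 - h1) := by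
          nth_rewrite 2 [hsub]; rw [inn_smul_right]
      _ = - (l * inn H (g1 - g2) (h1 - h2)) := by rw [inn_sub_right, inn_sub_right]; ring
      _ ≤ 0 := by nlinarith [h0]
  have := eq_zero_of_inn_self_nonpos H hdeg hinn
  rwa [sub_eq_zero] at this

end Mono
section Helpers

lemma nonneg_of_small_t {A B t0 : ℝ} (ht0 : 0 < t0)
    (h : ∀ t, 0 < t → t ≤ t0 → 0 ≤ A * t + B * t ^ 2) : 0 ≤ A := by
  by_contra h'
  push_neg at h'
  have hBpos : 0 < |B| + 1 := by positivity
  have hApos : 0 < -A / (|B| + 1) := by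
    apply div_pos (by linarith) hBpos
  set t := min t0 (-A / (|B| + 1)) with ht
  have htpos : 0 < t := lt_min ht0 hApos
  have hle := h t htpos (min_le_left _ _)
  have h2 : t ≤ -A / (|B| + 1) := min_le_right _ _
  have h3 : t * (|B| + 1) ≤ -A := by
    rw [le_div_iff₀ hBpos] at h2; exact h2
  have hB : B * t ^ 2 ≤ |B| * t * t := by
    have := le_abs_self B
    nlinarith [sq_nonneg t]
  nlinarith [mul_nonneg (abs_nonneg B) htpos.le]

lemma danskin_package {ι : Type*} (s : Finset ι) (hs : s.Nonempty) (a b : ι → ℝ) :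
    ∃ i₀ ∈ s, a i₀ = s.sup' hs a ∧
      ∃ t0 > 0, ∀ t, 0 < t → t ≤ t0 → ∀ i ∈ s, a i + t * b i ≤ s.sup' hs a + t * b i₀ := by
  classical
  set A := s.sup' hs a with hA
  set T := s.filter (fun i => a i = A) with hT
  have hTne : T.Nonempty := by
    obtain ⟨i, hi, hval⟩ := Finset.exists_mem_eq_sup' hs a
    exact ⟨i, Finset.mem_filter.2 ⟨hi, hval.symm⟩⟩
  obtain ⟨i₀, hi₀T, hi₀max⟩ := Finset.exists_max_image T b hTne
  have hi₀s : i₀ ∈ s := (Finset.mem_filter.1 hi₀T).1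
  have hi₀A : a i₀ = A := (Finset.mem_filter.1 hi₀T).2
  refine ⟨i₀, hi₀s, hi₀A, ?_⟩
  obtain ⟨k, hks, hkmax⟩ := Finset.exists_max_image s (fun i => b i - b i₀) hs
  set K := b k - b i₀ with hK
  have hK0 : 0 ≤ K := by
    have := hkmax i₀ hi₀s; simp at this; linarith [hkmax i₀ hi₀s]
  set S' := s.filter (fun i => ¬ a i = A) with hS'
  by_cases hS'ne : S'.Nonempty
  · obtain ⟨j₀, hj₀S', hj₀max⟩ := Finset.exists_max_image S' a hS'ne
    have hj₀s : j₀ ∈ s := (Finset.mem_filter.1 hj₀S').1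
    have hj₀ne : ¬ a j₀ = A := (Finset.mem_filter.1 hj₀S').2
    have hj₀lt : a j₀ < A := lt_of_le_of_ne (Finset.le_sup' a hj₀s) hj₀ne
    set γ := A - a j₀ with hγ
    have hγpos : 0 < γ := by simp [hγ]; linarith
    refine ⟨γ / (K + 1), div_pos hγpos (by linarith), ?_⟩
    intro t htpos htle i hi
    by_cases hiT : a i = A
    · have hb : b i ≤ b i₀ := hi₀max i (Finset.mem_filter.2 ⟨hi, hiT⟩)
      nlinarith
    · have hia : a i ≤ a j₀ := hj₀max i (Finset.mem_filter.2 ⟨hi, hiT⟩)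
      have hbK : b i - b i₀ ≤ K := hkmax i hi
      have htK : t * K ≤ γ := by
        rw [le_div_iff₀ (by linarith : (0:ℝ) < K + 1)] at htle
        nlinarith
      nlinarith
  · refine ⟨1, one_pos, ?_⟩
    intro t htpos htle i hi
    have hiT : a i = A := by
      by_contra hne
      exact hS'ne ⟨i, Finset.mem_filter.2 ⟨hi, hne⟩⟩
    have hb : b i ≤ b i₀ := hi₀max i (Finset.mem_filter.2 ⟨hi, hiT⟩)
    nlinarith

lemma sig_danskin {e : Finset V} (he : e.Nonempty) (u w : V → ℝ) :
    ∃ p₀ ∈ e ×ˢ e, (u p₀.1 - u p₀.2 = sig e u) ∧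
      ∃ t0 > 0, ∀ t, 0 < t → t ≤ t0 →
        sig e (u + t • w) ≤ sig e u + t * (w p₀.1 - w p₀.2) := by
  obtain ⟨p₀, hp₀, hval, t0, ht0, hbound⟩ :=
    danskin_package (e ×ˢ e) (prod_ne he) (fun p => u p.1 - u p.2) (fun p => w p.1 - w p.2)
  refine ⟨p₀, hp₀, by rw [hval, sig_eq he], t0, ht0, ?_⟩
  intro t htpos htle
  rw [sig_eq he, sig_eq he]
  refine Finset.sup'_le _ _ fun p hp => ?_
  have := hbound t htpos htle p hp
  simp only [Pi.add_apply, Pi.smul_apply, smul_eq_mul]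
  calc u p.1 + t * w p.1 - (u p.2 + t * w p.2)
      = (u p.1 - u p.2) + t * (w p.1 - w p.2) := by ring
    _ ≤ (e ×ˢ e).sup' (prod_ne he) (fun p => u p.1 - u p.2) + t * (w p₀.1 - w p₀.2) := this

end Helpers
section PhiPsi

variable (H : Hypergraph V)

lemma inn_add_right (a b c : V → ℝ) : inn H a (b + c) = inn H a b + inn H a c := by
  rw [inn_comm, inn_add_left, inn_comm H b, inn_comm H c]

lemma inn_neg_right (a b : V → ℝ) : inn H a (-b) = - inn H a b := by
  simp [inn, mul_neg, neg_div, Finset.sum_neg_distrib]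

lemma dot_add_left (a b u : V → ℝ) : dot (a + b) u = dot a u + dot b u := by
  rw [dot_comm, dot_add_right, dot_comm u a, dot_comm u b]

lemma inn_quad_expand (q d : V → ℝ) (s : ℝ) :
    inn H (q + s • d) (q + s • d) =
      inn H q q + 2 * s * inn H q d + s ^ 2 * inn H d d := by
  rw [inn_add_left, inn_add_right, inn_add_right, inn_smul_left, inn_smul_left,
    inn_smul_right, inn_smul_right, inn_comm H d q]
  ring

/-- The potential `Φ(u) = (1/2) ∑_e w(e) σ_e(u)²`. -/
def Phi (u : V → ℝ) : ℝ := (1 / 2) * ∑ e ∈ H.E, H.w e * (sig e u) ^ 2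

lemma Phi_nonneg (u : V → ℝ) : 0 ≤ Phi H u := by
  apply mul_nonneg (by norm_num)
  exact Finset.sum_nonneg fun e he => mul_nonneg (H.w_pos e he).le (sq_nonneg _)

lemma Phi_continuous : Continuous (Phi H) := by
  apply Continuous.mul continuous_const
  exact continuous_finset_sum _ fun e _ => continuous_const.mul ((sig_continuous).pow 2)

lemma continuous_inn_self : Continuous (fun a : V → ℝ => inn H a a) := by
  unfold inn
  exact continuous_finset_sum _ fun x _ =>
    ((continuous_apply x).mul (continuous_apply x)).div_const _

lemma continuous_dinv : Continuous (Dinv H) :=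
  continuous_pi fun x => (continuous_apply x).div_const _

/-- The functional minimized to construct the resolvent. -/
def Psi (l : ℝ) (f g : V → ℝ) : ℝ :=
  (1 / 2) * inn H (g - f) (g - f) + l * Phi H (Dinv H g)

lemma Psi_continuous (l : ℝ) (f : V → ℝ) : Continuous (Psi H l f) := by
  apply Continuous.add
  · exact continuous_const.mul ((continuous_inn_self H).comp
      (continuous_sub_right f))
  · exact continuous_const.mul ((Phi_continuous H).comp (continuous_dinv H))

lemma Psi_nonneg (hdeg : ∀ x, 0 < deg H x) {l : ℝ} (hl : 0 < l) (f g : V → ℝ) :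
    0 ≤ Psi H l f g := by
  have h1 := inn_self_nonneg H hdeg (g - f)
  have h2 := Phi_nonneg H (Dinv H g)
  unfold Psi; nlinarith

lemma Psi_exists_min [Nonempty V] (hdeg : ∀ x, 0 < deg H x) {l : ℝ} (hl : 0 < l) (f : V → ℝ) :
    ∃ g, ∀ g', Psi H l f g ≤ Psi H l f g' := by
  have hVne : (Finset.univ : Finset V).Nonempty := Finset.univ_nonempty
  set dmax := Finset.univ.sup' hVne (deg H) with hdm
  have hdmax : 0 < dmax :=
    lt_of_lt_of_le (hdeg (Classical.arbitrary V)) (Finset.le_sup' _ (Finset.mem_univ _))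
  set C := Psi H l f f + 1 with hCdef
  have hC : Psi H l f f < C := lt_add_one _
  have hCpos : 0 < C := lt_of_le_of_lt (Psi_nonneg H hdeg hl f f) hC
  set R := Real.sqrt (2 * dmax * C) with hRdef
  have hR2 : R ^ 2 = 2 * dmax * C := Real.sq_sqrt (by positivity)
  have hball : IsCompact (Metric.closedBall f R) := isCompact_closedBall f R
  have hne : (Metric.closedBall f R).Nonempty :=
    ⟨f, Metric.mem_closedBall_self (Real.sqrt_nonneg _)⟩
  obtain ⟨g₀, hg₀mem, hg₀min⟩ :=
    hball.exists_isMinOn hne (Psi_continuous H l f).continuousOn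
  refine ⟨g₀, fun g' => ?_⟩
  by_cases hg' : g' ∈ Metric.closedBall f R
  · exact hg₀min hg'
  · have h1 : Psi H l f g₀ ≤ Psi H l f f :=
      hg₀min (Metric.mem_closedBall_self (Real.sqrt_nonneg _))
    have hdist : ¬ dist g' f ≤ R := by simpa [Metric.mem_closedBall] using hg'
    rw [dist_pi_le_iff (Real.sqrt_nonneg _)] at hdist
    push_neg at hdist
    obtain ⟨x, hx⟩ := hdist
    have hx' : R < |g' x - f x| := by
      calc R < dist (g' x) (f x) := hx
        _ = |g' x - f x| := Real.dist_eq _ _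
    have hquad : 2 * dmax * C < (g' x - f x) ^ 2 := by
      have h := pow_lt_pow_left₀ hx' (Real.sqrt_nonneg _) (two_ne_zero)
      rwa [hR2, sq_abs] at h
    have hterm : (g' x - f x) * (g' x - f x) / deg H x ≤ inn H (g' - f) (g' - f) := by
      refine Finset.single_le_sum (f := fun z => (g' - f) z * (g' - f) z / deg H z)
        (fun z _ => div_nonneg (mul_self_nonneg _) (hdeg z).le) (Finset.mem_univ x)
    have hdx := hdeg x
    have hdle : deg H x ≤ dmax := Finset.le_sup' _ (Finset.mem_univ x)
    have h2C : 2 * C ≤ (g' x - f x) * (g' x - f x) / deg H x := by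
      rw [le_div_iff₀ hdx]
      nlinarith
    have hlow : (1 / 2) * inn H (g' - f) (g' - f) ≤ Psi H l f g' := by
      have := Phi_nonneg H (Dinv H g')
      unfold Psi; nlinarith
    linarith

end PhiPsi
section Existence

variable (H : Hypergraph V)

/-- The argmax face of `Bp e` in direction `u`. -/
def Fface (e : Finset V) (u : V → ℝ) : Set (V → ℝ) :=
  {b | b ∈ Bp e ∧ dot b u = sig e u}

lemma Fface_convex (e : Finset V) (u : V → ℝ) : Convex ℝ (Fface e u) := by
  intro b1 h1 b2 h2 a c ha hc hac
  refine ⟨Bp_convex h1.1 h2.1 ha hc hac, ?_⟩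
  rw [dot_add_left, dot_smul_left, dot_smul_left, h1.2, h2.2, ← add_mul, hac, one_mul]

lemma Fface_isCompact (e : Finset V) (u : V → ℝ) : IsCompact (Fface e u) := by
  have : Fface e u = Bp e ∩ {b | dot b u = sig e u} := rfl
  rw [this]
  exact Bp_isCompact.inter_right (isClosed_eq (continuous_dot_left u) continuous_const)

lemma Fface_nonempty {e : Finset V} (he : e.Nonempty) (u : V → ℝ) :
    (Fface e u).Nonempty := by
  obtain ⟨x, hx, y, hy, hval⟩ := sig_exists_argmax he u
  exact ⟨delta x - delta y, gen_mem_Bp hx hy, by rw [dot_delta_sub, hval]⟩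

theorem resolvent_exists [Nonempty V] (hdeg : ∀ x, 0 < deg H x) {l : ℝ} (hl : 0 < l)
    (f : V → ℝ) : ∃ g h, h ∈ NL H g ∧ f = g + l • h := by
  classical
  obtain ⟨g, hgmin⟩ := Psi_exists_min H hdeg hl f
  set u := Dinv H g with hu
  set S : Set (Finset V → (V → ℝ)) :=
    Set.pi Set.univ (fun e => if e ∈ H.E then Fface e u else {0}) with hS
  have hmemS : ∀ {b : Finset V → (V → ℝ)}, b ∈ S →
      ∀ e, (e ∈ H.E → b e ∈ Fface e u) ∧ (e ∉ H.E → b e = 0) := by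
    intro b hb e
    have this : b e ∈ (if e ∈ H.E then Fface e u else ({0} : Set (V → ℝ))) :=
      hb e (Set.mem_univ e)
    constructor
    · intro he; rwa [if_pos he] at this
    · intro he; rw [if_neg he] at this; simpa using this
  have hScompact : IsCompact S := by
    refine isCompact_univ_pi fun e => ?_
    show IsCompact (if e ∈ H.E then Fface e u else ({0} : Set (V → ℝ)))
    by_cases he : e ∈ H.E
    · rw [if_pos he]; exact Fface_isCompact e u
    · rw [if_neg he]; exact isCompact_singleton
  have hSne : S.Nonempty := by
    refine ⟨fun e => if he : e ∈ H.E then (Fface_nonempty (H.e_nonempty e he) u).choose else 0,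
      fun e _ => ?_⟩
    show (if he : e ∈ H.E then (Fface_nonempty (H.e_nonempty e he) u).choose else 0) ∈
      (if e ∈ H.E then Fface e u else ({0} : Set (V → ℝ)))
    by_cases he : e ∈ H.E
    · rw [if_pos he, dif_pos he]
      exact (Fface_nonempty (H.e_nonempty e he) u).choose_spec
    · rw [if_neg he, dif_neg he]; exact rfl
  set hmap : (Finset V → (V → ℝ)) → (V → ℝ) :=
    fun b => ∑ e ∈ H.E, (H.w e * sig e u) • b e with hhmap
  have hmap_cont : Continuous hmap :=
    continuous_finset_sum _ fun e _ => by fun_prop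
  set θ : (Finset V → (V → ℝ)) → ℝ :=
    fun b => inn H (g - f + l • hmap b) (g - f + l • hmap b) with hθ
  have hθcont : Continuous θ := by
    apply (continuous_inn_self H).comp
    exact continuous_const.add (hmap_cont.const_smul l)
  obtain ⟨bstar, hbstarS, hbstarmin⟩ := hScompact.exists_isMinOn hSne hθcont.continuousOn
  set hstar := hmap bstar with hhstar
  set q : V → ℝ := g - f + l • hstar with hq
  -- variational inequality
  have hVI : ∀ b ∈ S, 0 ≤ inn H q (hmap b - hstar) := by
    intro b hb
    set d : V → ℝ := hmap b - hstar with hd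
    have key : ∀ t : ℝ, 0 < t → t ≤ 1 →
        0 ≤ (2 * l * inn H q d) * t + (l ^ 2 * inn H d d) * t ^ 2 := by
      intro t htpos htle
      set bt : Finset V → (V → ℝ) := fun e => (1 - t) • bstar e + t • b e with hbt
      have hbtS : bt ∈ S := by
        intro e _
        show bt e ∈ (if e ∈ H.E then Fface e u else ({0} : Set (V → ℝ)))
        by_cases he : e ∈ H.E
        · rw [if_pos he]
          exact Fface_convex e u ((hmemS hbstarS e).1 he) ((hmemS hb e).1 he)
            (by linarith) htpos.le (by ring)
        · rw [if_neg he]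
          have h1 := (hmemS hbstarS e).2 he
          have h2 := (hmemS hb e).2 he
          simp [hbt, h1, h2]
      have hmapbt : hmap bt = hstar + t • d := by
        funext x
        simp only [hhmap, hd, hhstar, Finset.sum_apply, Pi.add_apply, Pi.smul_apply,
          Pi.sub_apply, smul_eq_mul]
        rw [← Finset.sum_sub_distrib, Finset.mul_sum, ← Finset.sum_add_distrib]
        refine Finset.sum_congr rfl fun e _ => ?_
        simp only [hbt, Pi.add_apply, Pi.smul_apply, smul_eq_mul]
        ring
      have hqbt : g - f + l • hmap bt = q + (l * t) • d := by
        rw [hmapbt]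
        funext x
        simp only [hq, Pi.add_apply, Pi.sub_apply, Pi.smul_apply, smul_eq_mul]
        ring
      have hmin := hbstarmin hbtS
      have hθbt : θ bt = inn H q q + 2 * (l * t) * inn H q d + (l * t) ^ 2 * inn H d d := by
        rw [hθ]
        simp only
        rw [hqbt, inn_quad_expand]
      have hθbs : θ bstar = inn H q q := rfl
      have : θ bstar ≤ θ bt := hmin
      rw [hθbt, hθbs] at this
      nlinarith
    have := nonneg_of_small_t one_pos key
    nlinarith
  -- Danskin direction
  set v : V → ℝ := -q with hv
  set w : V → ℝ := Dinv H v with hw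
  have hch : ∀ e : Finset V, ∃ p₀ : V × V, ∃ t0 : ℝ, 0 < t0 ∧
      (e ∈ H.E → (p₀ ∈ e ×ˢ e ∧ u p₀.1 - u p₀.2 = sig e u ∧
        ∀ t, 0 < t → t ≤ t0 → sig e (u + t • w) ≤ sig e u + t * (w p₀.1 - w p₀.2))) := by
    intro e
    by_cases he : e ∈ H.E
    · obtain ⟨p₀, hp, hval, t0, ht0, hb⟩ := sig_danskin (H.e_nonempty e he) u w
      exact ⟨p₀, t0, ht0, fun _ => ⟨hp, hval, hb⟩⟩
    · exact ⟨(Classical.arbitrary V, Classical.arbitrary V), 1, one_pos, fun h => absurd h he⟩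
  choose P T0 hT0pos hP using hch
  set T : ℝ := if hE : H.E.Nonempty then H.E.inf' hE T0 else 1 with hT
  have hTpos : 0 < T := by
    rw [hT]
    by_cases hE : H.E.Nonempty
    · rw [dif_pos hE]
      exact (Finset.lt_inf'_iff hE).2 fun e _ => hT0pos e
    · rw [dif_neg hE]; exact one_pos
  have hTle : ∀ e ∈ H.E, T ≤ T0 e := by
    intro e he
    rw [hT, dif_pos ⟨e, he⟩]
    exact Finset.inf'_le _ he
  set b₀ : Finset V → (V → ℝ) :=
    fun e => if e ∈ H.E then delta (P e).1 - delta (P e).2 else 0 with hb₀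
  have hb₀S : b₀ ∈ S := by
    intro e _
    show b₀ e ∈ (if e ∈ H.E then Fface e u else ({0} : Set (V → ℝ)))
    by_cases he : e ∈ H.E
    · obtain ⟨hpmem, hpval, _⟩ := hP e he
      obtain ⟨hp1, hp2⟩ := Finset.mem_product.1 hpmem
      simp only [hb₀, if_pos he]
      exact ⟨gen_mem_Bp hp1 hp2, by rw [dot_delta_sub, hpval]⟩
    · simp only [hb₀, if_neg he]
      rfl
  set h₀ : V → ℝ := hmap b₀ with hh₀
  -- the key first-order inequality in direction v
  have hdir : 0 ≤ inn H (g - f) v + l * inn H h₀ v := by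
    set μ : Finset V → ℝ := fun e => w (P e).1 - w (P e).2 with hμ
    have hA : ∀ t : ℝ, 0 < t → t ≤ T →
        0 ≤ (inn H (g - f) v + l * ∑ e ∈ H.E, H.w e * (sig e u * μ e)) * t +
          ((1 / 2) * inn H v v + (l / 2) * ∑ e ∈ H.E, H.w e * (μ e) ^ 2) * t ^ 2 := by
      intro t htpos htle
      have hmin := hgmin (g + t • v)
      have hdinv : Dinv H (g + t • v) = u + t • w := by
        funext x
        simp only [Dinv, Pi.add_apply, Pi.smul_apply, smul_eq_mul, hu, hw]
        rw [add_div, mul_div_assoc]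
      have hquad : inn H (g + t • v - f) (g + t • v - f) =
          inn H (g - f) (g - f) + 2 * t * inn H (g - f) v + t ^ 2 * inn H v v := by
        have : g + t • v - f = (g - f) + t • v := by funext x; simp; ring
        rw [this, inn_quad_expand]
      have hPhi : Phi H (u + t • w) ≤ Phi H u + t * ∑ e ∈ H.E, H.w e * (sig e u * μ e) +
          (t ^ 2 / 2) * ∑ e ∈ H.E, H.w e * (μ e) ^ 2 := by
        have hsum : ∑ e ∈ H.E, H.w e * (sig e (u + t • w)) ^ 2 ≤
            ∑ e ∈ H.E, (H.w e * (sig e u) ^ 2 + 2 * t * (H.w e * (sig e u * μ e)) +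
              t ^ 2 * (H.w e * (μ e) ^ 2)) := by
          refine Finset.sum_le_sum fun e he => ?_
          obtain ⟨hpmem, hpval, hsmall⟩ := hP e he
          have hne := H.e_nonempty e he
          have hsig := hsmall t htpos (le_trans htle (hTle e he))
          have hnn : 0 ≤ sig e (u + t • w) := sig_nonneg hne _
          have hsq : (sig e (u + t • w)) ^ 2 ≤ (sig e u + t * μ e) ^ 2 :=
            pow_le_pow_left₀ hnn hsig 2
          have hwpos := H.w_pos e he
          nlinarith
        rw [Finset.sum_add_distrib, Finset.sum_add_distrib, ← Finset.mul_sum,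
          ← Finset.mul_sum] at hsum
        unfold Phi
        nlinarith [hsum]
      have hPsi1 : Psi H l f (g + t • v) ≤ Psi H l f g +
          (inn H (g - f) v + l * ∑ e ∈ H.E, H.w e * (sig e u * μ e)) * t +
          ((1 / 2) * inn H v v + (l / 2) * ∑ e ∈ H.E, H.w e * (μ e) ^ 2) * t ^ 2 := by
        unfold Psi
        rw [hdinv, hquad]
        rw [← hu]
        nlinarith [hPhi]
      nlinarith [hmin, hPsi1]
    have := nonneg_of_small_t hTpos hA
    have hsum : ∑ e ∈ H.E, H.w e * (sig e u * μ e) = inn H h₀ v := by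
      rw [inn_eq_dot_dinv', ← hw, hh₀, hhmap, dot_sum_left]
      refine Finset.sum_congr rfl fun e he => ?_
      rw [dot_smul_left]
      simp only [hb₀, if_pos he]
      rw [dot_delta_sub]
      ring
    rwa [hsum] at this
  -- conclude q = 0
  have hq0 : q = 0 := by
    have h1 : inn H (g - f) v + l * inn H h₀ v = - inn H (g - f + l • h₀) q := by
      rw [hv, inn_neg_right, inn_neg_right, inn_add_left, inn_smul_left]
      ring
    have h2 : g - f + l • h₀ = q + l • (h₀ - hstar) := by
      funext x
      simp only [hq, Pi.add_apply, Pi.sub_apply, Pi.smul_apply, smul_eq_mul]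
      ring
    have h3 : 0 ≤ inn H q (h₀ - hstar) := hVI b₀ hb₀S
    have h4 : inn H (g - f + l • h₀) q ≤ 0 := by
      rw [h1] at hdir; linarith
    rw [h2, inn_add_left, inn_smul_left] at h4
    have h5 : inn H (h₀ - hstar) q = inn H q (h₀ - hstar) := inn_comm H _ _
    have h6 : inn H q q ≤ 0 := by nlinarith
    exact eq_zero_of_inn_self_nonpos H hdeg h6
  refine ⟨g, hstar, ?_, ?_⟩
  · refine ⟨bstar, fun e he => ?_, ?_⟩
    · obtain ⟨hBp, hdot⟩ := (hmemS hbstarS e).1 he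
      refine ⟨hBp, fun b' hb' => ?_⟩
      rw [hdot]
      exact dot_le_sig (H.e_nonempty e he) hb' u
    · rw [hhstar, hhmap]
      refine Finset.sum_congr rfl fun e he => ?_
      obtain ⟨hBp, hdot⟩ := (hmemS hbstarS e).1 he
      rw [hdot]
  · have := hq0
    rw [hq] at this
    funext x
    have hx := congrFun this x
    simp only [Pi.add_apply, Pi.sub_apply, Pi.smul_apply, Pi.zero_apply, smul_eq_mul] at hx ⊢
    linarith

end Existence
section ResolventFacts

variable (H : Hypergraph V)

lemma resolvent_spec [Nonempty V] (hdeg : ∀ x, 0 < deg H x) {l : ℝ} (hl : 0 < l)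
    (f : V → ℝ) : ∃ h ∈ NL H (Resolvent H l f), f = Resolvent H l f + l • h := by
  obtain ⟨g, h, hm, he⟩ := resolvent_exists H hdeg hl f
  exact Classical.epsilon_spec (⟨g, h, hm, he⟩ : ∃ g, ∃ h ∈ NL H g, f = g + l • h)

lemma resolvent_eq [Nonempty V] (hdeg : ∀ x, 0 < deg H x) {l : ℝ} (hl : 0 < l)
    {f g h : V → ℝ} (hm : h ∈ NL H g) (he : f = g + l • h) : Resolvent H l f = g := by
  obtain ⟨h', hm', he'⟩ := resolvent_spec H hdeg hl f
  exact resolvent_unique H hdeg hl hm' hm he' he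

lemma Lap_add_const_subset (u : V → ℝ) (c : ℝ) :
    Lap H (u + fun _ => c) ⊆ Lap H u := by
  have hdot : ∀ (e : Finset V) (b' : V → ℝ), b' ∈ Bp e →
      dot b' (u + fun _ => c) = dot b' u := by
    intro e b' hb'
    rw [dot_add_right, dot_const_of_Bp hb', add_zero]
  rintro g ⟨b, hb, rfl⟩
  refine ⟨b, fun e he => ⟨(hb e he).1, fun b' hb' => ?_⟩, ?_⟩
  · rw [← hdot e b' hb', ← hdot e (b e) (hb e he).1]
    exact (hb e he).2 b' hb'
  · refine Finset.sum_congr rfl fun e he => ?_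
    rw [hdot e (b e) (hb e he).1]

lemma Lap_add_const (u : V → ℝ) (c : ℝ) : Lap H (u + fun _ => c) = Lap H u := by
  apply Set.Subset.antisymm (Lap_add_const_subset H u c)
  have h1 : (u + fun _ => c) + (fun _ => -c) = u := by funext x; simp
  have h2 := Lap_add_const_subset H (u + fun _ => c) (-c)
  rwa [h1] at h2

lemma NL_add_cdeg (hdeg : ∀ x, 0 < deg H x) (g : V → ℝ) (c : ℝ) :
    NL H (g + c • deg H) = NL H g := by
  unfold NL
  have hdi : Dinv H (g + c • deg H) = Dinv H g + fun _ => c := by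
    funext x
    simp only [Dinv, Pi.add_apply, Pi.smul_apply, smul_eq_mul]
    rw [add_div, mul_div_assoc, div_self (hdeg x).ne', mul_one]
  rw [hdi, Lap_add_const]

lemma resolvent_shift [Nonempty V] (hdeg : ∀ x, 0 < deg H x) {l : ℝ} (hl : 0 < l)
    (f : V → ℝ) (c : ℝ) :
    Resolvent H l (f + c • deg H) = Resolvent H l f + c • deg H := by
  obtain ⟨h, hm, he⟩ := resolvent_spec H hdeg hl f
  refine resolvent_eq H hdeg hl (g := Resolvent H l f + c • deg H) (h := h) ?_ ?_
  · rw [NL_add_cdeg H hdeg]; exact hm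
  · funext x
    have hx := congrFun he x
    simp only [Pi.add_apply, Pi.smul_apply, smul_eq_mul] at hx ⊢
    linarith

lemma inn_delta_sub (f : V → ℝ) (x y : V) :
    inn H f (delta x - delta y) = f x / deg H x - f y / deg H y := by
  rw [inn_eq_dot_dinv, dot_comm, dot_delta_sub]
  rfl

lemma inn_deg_delta (hdeg : ∀ x, 0 < deg H x) (x y : V) :
    inn H (deg H) (delta x - delta y) = 0 := by
  rw [inn_delta_sub, div_self (hdeg x).ne', div_self (hdeg y).ne', sub_self]

lemma inn_add_cdeg_delta (hdeg : ∀ x, 0 < deg H x) (f : V → ℝ) (c : ℝ) (x y : V) :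
    inn H (f + c • deg H) (delta x - delta y) = inn H f (delta x - delta y) := by
  rw [inn_add_left, inn_smul_left, inn_deg_delta H hdeg, mul_zero, add_zero]

lemma lip1_shift (hdeg : ∀ x, 0 < deg H x) {f : V → ℝ} (hf : f ∈ Lip1 H) (c : ℝ) :
    f + c • deg H ∈ Lip1 H := by
  intro x y
  rw [inn_add_cdeg_delta H hdeg]
  exact hf x y

lemma gdist_le_hdiam (x y : V) : gdist H x y ≤ hdiam H := by
  unfold gdist hdiam
  exact_mod_cast Finset.le_sup (f := fun p : V × V => hdistN H p.1 p.2)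
    (Finset.mem_univ (x, y))

lemma hdiam_nonneg : 0 ≤ hdiam H := Nat.cast_nonneg _

lemma continuous_inn_left (v : V → ℝ) : Continuous (fun f : V → ℝ => inn H f v) := by
  unfold inn
  exact continuous_finset_sum _ fun x _ =>
    ((continuous_apply x).mul continuous_const).div_const _

end ResolventFacts
/-- `KD_λ(x,y)` may be computed over the weighted 1-Lipschitz
functions with `‖f‖_∞ ≤ diam(H)`, and this set of functions is compact. -/
theorem stmt5 [Nonempty V] (H : Hypergraph V) (hconn : Connected H)
    (hdeg : ∀ x : V, 0 < deg H x) (l : ℝ) (hl : 0 < l) (x y : V) :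
    KD H l x y =
      sSup { r | ∃ f ∈ Lip1 H, (⨆ z : V, |f z / deg H z|) ≤ hdiam H ∧
        r = inn H (Resolvent H l f) (delta x - delta y) } ∧
    IsCompact { f : V → ℝ | f ∈ Lip1 H ∧ (⨆ z : V, |f z / deg H z|) ≤ hdiam H } := by
  constructor
  · unfold KD
    congr 1
    ext r
    simp only [Set.mem_setOf_eq]
    constructor
    · rintro ⟨f, hf, rfl⟩
      have hVne : (Finset.univ : Finset V).Nonempty := Finset.univ_nonempty
      set G : V → ℝ := fun z => f z / deg H z with hG
      set mx := Finset.univ.sup' hVne G with hmx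
      set mn := Finset.univ.inf' hVne G with hmn
      have hle : ∀ z, G z ≤ mx := fun z => Finset.le_sup' G (Finset.mem_univ z)
      have hge : ∀ z, mn ≤ G z := fun z => Finset.inf'_le G (Finset.mem_univ z)
      obtain ⟨zM, _, hzM⟩ := Finset.exists_mem_eq_sup' hVne G
      obtain ⟨zm, _, hzm⟩ := Finset.exists_mem_eq_inf' hVne G
      have hosc : mx - mn ≤ hdiam H := by
        have h1 : inn H f (delta zM - delta zm) ≤ gdist H zM zm := hf zM zm
        have h2 := gdist_le_hdiam H zM zm
        rw [inn_delta_sub] at h1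
        rw [hmx, hzM, hmn, hzm]
        show G zM - G zm ≤ hdiam H
        rw [hG]
        simp only
        linarith
      set c := -(mx + mn) / 2 with hc
      refine ⟨f + c • deg H, lip1_shift H hdeg hf c, ?_, ?_⟩
      · refine ciSup_le fun z => ?_
        have hGz : (f + c • deg H) z / deg H z = G z + c := by
          simp only [Pi.add_apply, Pi.smul_apply, smul_eq_mul, hG]
          rw [add_div, mul_div_assoc, div_self (hdeg z).ne', mul_one]
        rw [hGz]
        have h1 := hle z
        have h2 := hge z
        have hd0 := hdiam_nonneg H
        rw [abs_le]
        constructor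
        · rw [hc]; linarith
        · rw [hc]; linarith
      · rw [resolvent_shift H hdeg hl, inn_add_cdeg_delta H hdeg]
    · rintro ⟨f, hf, _, rfl⟩
      exact ⟨f, hf, rfl⟩
  · set A := {f : V → ℝ | f ∈ Lip1 H ∧ (⨆ z : V, |f z / deg H z|) ≤ hdiam H} with hA
    have hbdd : ∀ f ∈ A, ∀ z, |f z / deg H z| ≤ hdiam H := by
      intro f hf z
      refine le_trans ?_ hf.2
      exact le_ciSup (f := fun z : V => |f z / deg H z|)
        (Set.Finite.bddAbove (Set.finite_range _)) z
    have hsub : A ⊆ Set.pi Set.univ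
        (fun z => Set.Icc (-(hdiam H * deg H z)) (hdiam H * deg H z)) := by
      intro f hf z _
      show f z ∈ Set.Icc (-(hdiam H * deg H z)) (hdiam H * deg H z)
      have hz := hbdd f hf z
      have hdz := hdeg z
      rw [abs_le] at hz
      obtain ⟨h1, h2⟩ := hz
      rw [div_le_iff₀ hdz] at h2
      rw [le_div_iff₀ hdz] at h1
      rw [Set.mem_Icc]
      constructor <;> nlinarith
    have hclosed : IsClosed A := by
      have h1 : IsClosed (Lip1 H) := by
        have heq : Lip1 H = ⋂ (a : V), ⋂ (b : V),
            {f : V → ℝ | inn H f (delta a - delta b) ≤ gdist H a b} := by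
          ext f; simp [Lip1, Set.mem_iInter]
        rw [heq]
        exact isClosed_iInter fun a => isClosed_iInter fun b =>
          isClosed_le (continuous_inn_left H _) continuous_const
      have h2 : IsClosed {f : V → ℝ | (⨆ z : V, |f z / deg H z|) ≤ hdiam H} := by
        have heq : {f : V → ℝ | (⨆ z : V, |f z / deg H z|) ≤ hdiam H} =
            ⋂ (z : V), {f : V → ℝ | |f z / deg H z| ≤ hdiam H} := by
          ext f
          simp only [Set.mem_setOf_eq, Set.mem_iInter]
          exact ciSup_le_iff (Set.Finite.bddAbove (Set.finite_range _))
        rw [heq]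
        exact isClosed_iInter fun z =>
          isClosed_le ((continuous_apply z).div_const _).abs continuous_const
      exact h1.inter h2
    exact IsCompact.of_isClosed_subset
      (isCompact_univ_pi fun z => isCompact_Icc) hclosed hsub

end HypRicci
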